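/- In the ring game G with n >= 3 players and set of colours C with |C| >= n, every scheduler f satisfying f(s, 1) = s_1' (the successor of s_1 in the fixed cyclic order on C) ensures self-stabilization: in every improvement path generated by f, every player is selected infinitely often and, from a certain point on, every joint strategy in it is legitimate. -/

import Mathlib

/-!
Game-theoretic formalization of Dijkstra's self-stabilization (Apt & Shoja).
Players are `Fin n`; a joint strategy is `s : Fin n → C`.
-/

/-- Payoff in the ring game `G` on the directed ring `0 → 1 → ⋯ → n-1 → 0`:
player `0` plays the anti-coordination game with respect to its predecessor
(player `n-1`, i.e. `0 - 1` in `Fin n`); every other player `i` plays the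
coordination game with respect to its predecessor `i - 1`. -/
def ringPayoff {n : ℕ} [NeZero n] {C : Type*} [DecidableEq C]
    (s : Fin n → C) (i : Fin n) : ℕ :=
  if i = 0 then (if s i = s (i - 1) then 0 else 1)
  else (if s i = s (i - 1) then 1 else 0)

/-- `s i` is a best response of player `i` to the strategies of the others in `s`. -/
def BestResponse {n : ℕ} {C : Type*}
    (p : (Fin n → C) → Fin n → ℕ) (s : Fin n → C) (i : Fin n) : Prop :=
  ∀ c : C, p (Function.update s i c) i ≤ p s i

/-- An improvement step from `s` to `s'` in which player `i` is selected:
only player `i` changes its strategy and its payoff strictly increases. -/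
def StepAt {n : ℕ} {C : Type*}
    (p : (Fin n → C) → Fin n → ℕ) (i : Fin n) (s s' : Fin n → C) : Prop :=
  (∀ j, j ≠ i → s' j = s j) ∧ p s i < p s' i

/-- A joint strategy is legitimate if exactly one player does not play a best response. -/
def Legitimate {n : ℕ} {C : Type*}
    (p : (Fin n → C) → Fin n → ℕ) (s : Fin n → C) : Prop :=
  ∃! i : Fin n, ¬ BestResponse p s i


section AuxDijkstra

variable {n : ℕ} [NeZero n] {C : Type*} [DecidableEq C]

private def tokens (s : Fin n → C) : Finset (Fin n) :=
  Finset.univ.filter (fun i => if i = 0 then s 0 = s (0 - 1) else ¬ (s i = s (i - 1)))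

private lemma mem_tokens_zero {s : Fin n → C} : 0 ∈ tokens s ↔ s 0 = s (0 - 1) := by
  simp [tokens]

private lemma mem_tokens_ne {s : Fin n → C} {i : Fin n} (h : i ≠ 0) :
    i ∈ tokens s ↔ s i ≠ s (i - 1) := by
  simp [tokens, h]

private lemma finOneNeZero (hn : 1 < n) : (1 : Fin n) ≠ 0 := by
  simp [Fin.ext_iff, Fin.val_one', Nat.mod_eq_of_lt hn]

private lemma sub_one_ne_self (hn : 1 < n) (a : Fin n) : a - 1 ≠ a := by
  rw [ne_eq, sub_eq_self]
  exact finOneNeZero hn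

private lemma sub_one_val (hn : 1 < n) (a : Fin n) (ha : a ≠ 0) : (a - 1).val = a.val - 1 := by
  have h1 : (1 : Fin n).val = 1 := by simp [Fin.val_one', Nat.mod_eq_of_lt hn]
  have h2 : (a - 1).val = (n - (1:Fin n).val + a.val) % n := by rw [Fin.sub_def]
  rw [h1] at h2
  have h3 := a.isLt
  have h4 : a.val ≠ 0 := fun h => ha (Fin.ext h)
  have h5 : (n - 1 + a.val) % n = a.val - 1 := by
    have heq : n - 1 + a.val = (a.val - 1) + n := by omega
    rw [heq, Nat.add_mod_right, Nat.mod_eq_of_lt (by omega)]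
  omega

private lemma neg_one_val (hn : 1 < n) : ((0 : Fin n) - 1).val = n - 1 := by
  have h1 : (1 : Fin n).val = 1 := by simp [Fin.val_one', Nat.mod_eq_of_lt hn]
  have h2 : ((0 : Fin n) - 1).val = (n - (1:Fin n).val + (0:Fin n).val) % n := by
    rw [Fin.sub_def]
  rw [h1] at h2
  simp only [Fin.val_zero, Nat.add_zero] at h2
  rw [h2, Nat.mod_eq_of_lt (by omega)]

private lemma add_one_val (hn : 1 < n) (a : Fin n) (ha : a + 1 ≠ 0) :
    (a + 1).val = a.val + 1 := by
  have h1 : (1 : Fin n).val = 1 := by simp [Fin.val_one', Nat.mod_eq_of_lt hn]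
  have h2 : (a + 1).val = (a.val + (1:Fin n).val) % n := by rw [Fin.add_def]
  rw [h1] at h2
  have h3 := a.isLt
  by_cases h : a.val + 1 < n
  · rw [h2, Nat.mod_eq_of_lt h]
  · exfalso
    apply ha
    have hv : a.val + 1 = n := by omega
    apply Fin.ext
    rw [h2, hv, Nat.mod_self, Fin.val_zero]

private lemma notBR_iff (hn : 1 < n) [Fintype C] (hC : 1 < Fintype.card C)
    (s : Fin n → C) (i : Fin n) :
    ¬ BestResponse (ringPayoff (n := n) (C := C)) s i ↔ i ∈ tokens s := by
  have hne : i - 1 ≠ i := sub_one_ne_self hn i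
  by_cases h0 : i = 0
  · subst h0
    rw [mem_tokens_zero]
    constructor
    · intro hBR
      by_contra hne'
      apply hBR
      intro c
      simp only [ringPayoff, if_pos rfl, if_neg hne']
      split_ifs <;> omega
    · intro heq hBR
      obtain ⟨c, hc⟩ := Fintype.exists_ne_of_one_lt_card hC (s (0 - 1))
      have h := hBR c
      simp only [ringPayoff, if_pos rfl, Function.update_self,
        Function.update_of_ne hne, if_neg hc, if_pos heq] at h
      simp at h
  · rw [mem_tokens_ne h0]
    constructor
    · intro hBR
      by_contra hne'
      apply hBR
      intro c
      simp only [ringPayoff, if_neg h0, if_pos hne']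
      split_ifs <;> omega
    · intro hne' hBR
      have h := hBR (s (i - 1))
      simp only [ringPayoff, if_neg h0, Function.update_self,
        Function.update_of_ne hne, if_pos rfl, if_neg hne'] at h
      simp at h

private lemma step_facts (hn : 1 < n) (s s' : Fin n → C) (i : Fin n)
    (hupd : ∀ j, j ≠ i → s' j = s j)
    (htok : i ∈ tokens s)
    (hpay : ringPayoff s i < ringPayoff s' i) :
    i ∉ tokens s' ∧ (i ≠ 0 → s' i = s (i - 1)) ∧ (i = 0 → s' 0 ≠ s 0) ∧
    (∀ j, j ≠ i → j ≠ i + 1 → (j ∈ tokens s' ↔ j ∈ tokens s)) ∧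
    tokens s' ⊆ insert (i + 1) ((tokens s).erase i) := by
  have hii : i - 1 ≠ i := sub_one_ne_self hn i
  have hpre : s' (i - 1) = s (i - 1) := hupd _ hii
  have hnot : i ∉ tokens s' := by
    by_cases h0 : i = 0
    · subst h0
      rw [mem_tokens_zero]
      intro h
      simp only [ringPayoff, if_pos rfl, if_pos h] at hpay
      rw [mem_tokens_zero] at htok
      simp [htok] at hpay
    · rw [mem_tokens_ne h0, not_not]
      rw [mem_tokens_ne h0] at htok
      by_contra h
      simp only [ringPayoff, if_neg h0, if_neg h, if_neg htok] at hpay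
      omega
  have hcopy : i ≠ 0 → s' i = s (i - 1) := by
    intro h0
    rw [mem_tokens_ne h0, not_not, hpre] at hnot
    exact hnot
  have hzero : i = 0 → s' 0 ≠ s 0 := by
    intro h0; subst h0
    rw [mem_tokens_zero, hpre] at hnot
    rw [mem_tokens_zero] at htok
    rw [← htok] at hnot
    exact hnot
  have hmid : ∀ j, j ≠ i → j ≠ i + 1 → (j ∈ tokens s' ↔ j ∈ tokens s) := by
    intro j hji hji1
    have h1 : s' j = s j := hupd _ hji
    have h2 : s' (j - 1) = s (j - 1) := by
      apply hupd
      intro h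
      exact hji1 (by rw [← h]; exact (sub_add_cancel j 1).symm)
    by_cases h0 : j = 0
    · subst h0; rw [mem_tokens_zero, mem_tokens_zero, h1, h2]
    · rw [mem_tokens_ne h0, mem_tokens_ne h0, h1, h2]
  refine ⟨hnot, hcopy, hzero, hmid, ?_⟩
  intro j hj
  by_cases hj1 : j = i + 1
  · subst hj1; exact Finset.mem_insert_self _ _
  · have hji : j ≠ i := fun h => hnot (h ▸ hj)
    apply Finset.mem_insert_of_mem
    rw [Finset.mem_erase]
    exact ⟨hji, (hmid j hji hj1).mp hj⟩

private lemma finset_erase_comm (s : Finset (Fin n)) (a b : Fin n) :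
    (s.erase a).erase b = (s.erase b).erase a := by
  ext x
  simp only [Finset.mem_erase]
  tauto

private lemma sum_insert_le' (s : Finset (Fin n)) (f : Fin n → ℕ) (a : Fin n) :
    ∑ x ∈ insert a s, f x ≤ f a + ∑ x ∈ s, f x := by
  by_cases h : a ∈ s
  · rw [Finset.insert_eq_self.mpr h]
    exact Nat.le_add_left _ _
  · rw [Finset.sum_insert h]

end AuxDijkstra

/-- Consider the ring game `G` with `n ≥ 3` players and a set of
colours `C` with `|C| ≥ n`, together with a fixed cyclic order on `C` (a
permutation `π` of `C` consisting of a single cycle through all elements of `C`).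
Every scheduler `f` satisfying `f s 0 = π (s 0)` ensures self-stabilization:
in every improvement path generated by `f`, every player is selected infinitely
often and, from a certain point on, every joint strategy in it is legitimate. -/

theorem ring_game_scheduler_self_stabilization
    (n : ℕ) [NeZero n] (hn : 3 ≤ n)
    (C : Type*) [Fintype C] [DecidableEq C] (hC : n ≤ Fintype.card C)
    (π : Equiv.Perm C) (hπ : ∀ x y : C, ∃ k : ℕ, (π ^ k) x = y)
    (f : (Fin n → C) → Fin n → C)
    (hsched : ∀ (s : Fin n → C) (i : Fin n),
      ¬ BestResponse (ringPayoff (n := n) (C := C)) s i →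
      ringPayoff s i < ringPayoff (Function.update s i (f s i)) i)
    (hf0 : ∀ s : Fin n → C, f s 0 = π (s 0))
    (σ : ℕ → Fin n → C) (sel : ℕ → Fin n)
    (hgen : ∀ k : ℕ,
      ¬ BestResponse (ringPayoff (n := n) (C := C)) (σ k) (sel k) ∧
      σ (k + 1) = Function.update (σ k) (sel k) (f (σ k) (sel k))) :
    (∀ (i : Fin n) (k : ℕ), ∃ m, k ≤ m ∧ sel m = i) ∧
    (∃ K : ℕ, ∀ m, K ≤ m → Legitimate (ringPayoff (n := n) (C := C)) (σ m)) := by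
  classical
  have hn1 : 1 < n := by omega
  have hC1 : 1 < Fintype.card C := by omega
  -- basic step facts
  have hstep : ∀ k, (∀ j, j ≠ sel k → σ (k+1) j = σ k j) ∧ sel k ∈ tokens (σ k) ∧
      sel k ∉ tokens (σ (k+1)) ∧ (sel k ≠ 0 → σ (k+1) (sel k) = σ k (sel k - 1)) ∧
      (sel k = 0 → σ (k+1) 0 = π (σ k 0)) ∧
      (∀ j, j ≠ sel k → j ≠ sel k + 1 → (j ∈ tokens (σ (k+1)) ↔ j ∈ tokens (σ k))) ∧
      tokens (σ (k+1)) ⊆ insert (sel k + 1) ((tokens (σ k)).erase (sel k)) := by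
    intro k
    obtain ⟨hbr, hupd⟩ := hgen k
    have htok : sel k ∈ tokens (σ k) := (notBR_iff hn1 hC1 _ _).mp hbr
    have hpay := hsched (σ k) (sel k) hbr
    rw [← hupd] at hpay
    have hupd' : ∀ j, j ≠ sel k → σ (k+1) j = σ k j := by
      intro j hj; rw [hupd]; exact Function.update_of_ne hj _ _
    obtain ⟨h1, h2, _h3, h4, h5⟩ := step_facts hn1 (σ k) (σ (k+1)) (sel k) hupd' htok hpay
    refine ⟨hupd', htok, h1, h2, ?_, h4, h5⟩
    intro h0
    rw [hupd, h0, Function.update_self, hf0]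
  -- token count is nonincreasing
  have hmono : ∀ k, (tokens (σ (k+1))).card ≤ (tokens (σ k)).card := by
    intro k
    obtain ⟨-, htok, -, -, -, -, hsub⟩ := hstep k
    calc (tokens (σ (k+1))).card
        ≤ (insert (sel k + 1) ((tokens (σ k)).erase (sel k))).card :=
          Finset.card_le_card hsub
      _ ≤ ((tokens (σ k)).erase (sel k)).card + 1 := Finset.card_insert_le _ _
      _ = (tokens (σ k)).card - 1 + 1 := by rw [Finset.card_erase_of_mem htok]
      _ = (tokens (σ k)).card := by
          have := Finset.card_pos.mpr ⟨sel k, htok⟩; omega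
  have hmono' : ∀ k m, k ≤ m → (tokens (σ m)).card ≤ (tokens (σ k)).card := by
    intro k m hkm
    induction m, hkm using Nat.le_induction with
    | base => exact le_refl _
    | succ m hm ih => exact le_trans (hmono m) ih
  -- player 0 is selected infinitely often
  have hzio : ∀ k, ∃ m, k ≤ m ∧ sel m = 0 := by
    intro k
    by_contra hcon
    push_neg at hcon
    have hdec : ∀ t, k ≤ t →
        (∑ j ∈ (tokens (σ (t+1))).erase 0, (n - j.val)) + 1 ≤
        ∑ j ∈ (tokens (σ t)).erase 0, (n - j.val) := by
      intro t ht
      obtain ⟨-, htok, -, -, -, -, hsub⟩ := hstep t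
      have hi0 : sel t ≠ 0 := hcon t ht
      have hiT : sel t ∈ (tokens (σ t)).erase 0 := Finset.mem_erase.mpr ⟨hi0, htok⟩
      have hsplit : (n - (sel t).val) +
          ∑ j ∈ ((tokens (σ t)).erase 0).erase (sel t), (n - j.val)
          = ∑ j ∈ (tokens (σ t)).erase 0, (n - j.val) :=
        Finset.add_sum_erase _ (fun j => n - j.val) hiT
      have hsub2 : (tokens (σ (t+1))).erase 0 ⊆
          (insert (sel t + 1) ((tokens (σ t)).erase (sel t))).erase 0 :=
        Finset.erase_subset_erase _ hsub
      have hlt := (sel t).isLt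
      by_cases hc : sel t + 1 = 0
      · have he : (insert (sel t + 1) ((tokens (σ t)).erase (sel t))).erase 0
            = ((tokens (σ t)).erase 0).erase (sel t) := by
          rw [hc, Finset.erase_insert_eq_erase, finset_erase_comm]
        rw [he] at hsub2
        have hle : (∑ j ∈ (tokens (σ (t+1))).erase 0, (n - j.val)) ≤
            ∑ j ∈ ((tokens (σ t)).erase 0).erase (sel t), (n - j.val) :=
          Finset.sum_le_sum_of_subset hsub2
        omega
      · have he : (insert (sel t + 1) ((tokens (σ t)).erase (sel t))).erase 0
            = insert (sel t + 1) (((tokens (σ t)).erase 0).erase (sel t)) := by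
          rw [Finset.erase_insert_of_ne hc, finset_erase_comm]
        rw [he] at hsub2
        have hle : (∑ j ∈ (tokens (σ (t+1))).erase 0, (n - j.val)) ≤
            ∑ j ∈ insert (sel t + 1) (((tokens (σ t)).erase 0).erase (sel t)), (n - j.val) :=
          Finset.sum_le_sum_of_subset hsub2
        have hle2 := sum_insert_le' (((tokens (σ t)).erase 0).erase (sel t))
          (fun j => n - j.val) (sel t + 1)
        have hv : (sel t + 1).val = (sel t).val + 1 := add_one_val hn1 _ hc
        simp only [hv] at hle2
        omega
    have hchain : ∀ d, (∑ j ∈ (tokens (σ (k+d))).erase 0, (n - j.val)) + d ≤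
        ∑ j ∈ (tokens (σ k)).erase 0, (n - j.val) := by
      intro d
      induction d with
      | zero => simp
      | succ d ih =>
        have h2 := hdec (k+d) (Nat.le_add_right k d)
        have h3 : k + (d+1) = (k+d)+1 := by omega
        rw [h3]
        omega
    have := hchain ((∑ j ∈ (tokens (σ k)).erase 0, (n - j.val)) + 1)
    omega
  -- base time t0
  obtain ⟨t0, -, hsel0⟩ := hzio 0
  -- orbit facts
  have horbit : ∀ (u : C) (d : ℕ), 0 < d → (π ^ d) u = u → Fintype.card C ≤ d := by
    intro u d hd hfix
    have hmod : ∀ m, (π ^ m) u = (π ^ (m % d)) u := by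
      intro m
      induction m using Nat.strong_induction_on with
      | _ m ih =>
        by_cases h : m < d
        · rw [Nat.mod_eq_of_lt h]
        · push_neg at h
          have h1 : m = (m - d) + d := by omega
          rw [Nat.mod_eq_sub_mod h, ← ih (m - d) (by omega)]
          conv_lhs => rw [h1]
          rw [pow_add, Equiv.Perm.mul_apply, hfix]
    have hsurj : Function.Surjective (fun m : Fin d => (π ^ (m : ℕ)) u) := by
      intro y
      obtain ⟨j, hj⟩ := hπ u y
      refine ⟨⟨j % d, Nat.mod_lt _ hd⟩, ?_⟩
      simp only
      rw [← hmod]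
      exact hj
    have hcard := Fintype.card_le_of_surjective _ hsurj
    simpa using hcard
  have hginj : ∀ a b, a < Fintype.card C → b < Fintype.card C →
      (π ^ a) (σ t0 0) = (π ^ b) (σ t0 0) → a = b := by
    intro a b ha hb hab
    rcases Nat.lt_trichotomy a b with h | h | h
    · exfalso
      have hfix : (π ^ (b - a)) ((π ^ a) (σ t0 0)) = (π ^ a) (σ t0 0) := by
        rw [← Equiv.Perm.mul_apply, ← pow_add, Nat.sub_add_cancel (le_of_lt h)]
        exact hab.symm
      have := horbit _ _ (by omega) hfix
      omega
    · exact h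
    · exfalso
      have hfix : (π ^ (a - b)) ((π ^ b) (σ t0 0)) = (π ^ b) (σ t0 0) := by
        rw [← Equiv.Perm.mul_apply, ← pow_add, Nat.sub_add_cancel (le_of_lt h)]
        exact hab
      have := horbit _ _ (by omega) hfix
      omega
  -- B and a fresh colour index j
  have htok0 : σ t0 0 = σ t0 (0 - 1) := by
    have h := (hstep t0).2.1
    rw [hsel0] at h
    exact mem_tokens_zero.mp h
  have hv0B : σ t0 0 ∈ Finset.image (σ t0) (Finset.univ.erase 0) := by
    rw [Finset.mem_image]
    exact ⟨0 - 1, Finset.mem_erase.mpr ⟨sub_one_ne_self hn1 0, Finset.mem_univ _⟩, htok0.symm⟩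
  have hBcard : (Finset.image (σ t0) (Finset.univ.erase 0)).card ≤ n - 1 := by
    calc (Finset.image (σ t0) (Finset.univ.erase 0)).card
        ≤ (Finset.univ.erase (0 : Fin n)).card := Finset.card_image_le
      _ = n - 1 := by rw [Finset.card_erase_of_mem (Finset.mem_univ _)]; simp
  have hfresh : ∃ j, 1 ≤ j ∧ j < Fintype.card C ∧
      (π ^ j) (σ t0 0) ∉ Finset.image (σ t0) (Finset.univ.erase 0) := by
    by_contra hcon
    push_neg at hcon
    have hinj : Set.InjOn (fun m => (π ^ m) (σ t0 0))
        (Finset.Ico 1 (Fintype.card C)) := by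
      intro a ha b hb hab
      rw [Finset.coe_Ico, Set.mem_Ico] at ha hb
      exact hginj a b ha.2 hb.2 hab
    have hsubB : (Finset.Ico 1 (Fintype.card C)).image (fun m => (π ^ m) (σ t0 0)) ⊆
        (Finset.image (σ t0) (Finset.univ.erase 0)).erase (σ t0 0) := by
      intro x hx
      rw [Finset.mem_image] at hx
      obtain ⟨m, hm, hxm⟩ := hx
      rw [Finset.mem_Ico] at hm
      rw [Finset.mem_erase]
      refine ⟨?_, hxm ▸ hcon m hm.1 hm.2⟩
      rw [← hxm]
      intro hx0
      have hm0 : m = 0 := hginj m 0 hm.2 (by omega) (by simpa using hx0)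
      omega
    have hcardim : ((Finset.Ico 1 (Fintype.card C)).image
        (fun m => (π ^ m) (σ t0 0))).card = Fintype.card C - 1 := by
      rw [Finset.card_image_of_injOn hinj, Nat.card_Ico]
    have h1 := Finset.card_le_card hsubB
    have h2 : ((Finset.image (σ t0) (Finset.univ.erase 0)).erase (σ t0 0)).card ≤ n - 2 := by
      rw [Finset.card_erase_of_mem hv0B]
      omega
    omega
  obtain ⟨j, hj1, hjC, hjB⟩ := hfresh
  -- counting 0-selections
  set cnt : ℕ → ℕ := fun t => ((Finset.Ico t0 t).filter (fun m => sel m = 0)).card with hcnt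
  have hcnt0 : cnt t0 = 0 := by simp [hcnt]
  have hcnt_succ : ∀ t, t0 ≤ t → cnt (t+1) = if sel t = 0 then cnt t + 1 else cnt t := by
    intro t ht
    have hins : Finset.Ico t0 (t+1) = insert t (Finset.Ico t0 t) :=
      Nat.Ico_succ_right_eq_insert_Ico ht
    rw [hcnt]
    simp only [hins, Finset.filter_insert]
    split_ifs with h
    · rw [Finset.card_insert_of_notMem (by simp)]
    · rfl
  -- the value invariant
  have hinv : ∀ t, t0 ≤ t → (σ t 0 = (π ^ cnt t) (σ t0 0) ∧
      ∀ i : Fin n, i ≠ 0 → (σ t i ∈ Finset.image (σ t0) (Finset.univ.erase 0) ∨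
        ∃ m, m ≤ cnt t ∧ σ t i = (π ^ m) (σ t0 0))) := by
    intro t ht
    induction t, ht using Nat.le_induction with
    | base =>
      constructor
      · rw [hcnt0, pow_zero]; rfl
      · intro i hi
        left
        exact Finset.mem_image_of_mem _ (Finset.mem_erase.mpr ⟨hi, Finset.mem_univ _⟩)
    | succ t ht ih =>
      obtain ⟨hupd', -, -, hcopy, hzero, -, -⟩ := hstep t
      have hcs := hcnt_succ t ht
      by_cases h0 : sel t = 0
      · rw [if_pos h0] at hcs
        constructor
        · rw [hcs, hzero h0, ih.1, pow_succ', Equiv.Perm.mul_apply]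
        · intro i hi
          have hch : σ (t+1) i = σ t i := hupd' i (by rw [h0]; exact hi)
          rw [hch]
          rcases ih.2 i hi with h | ⟨m, hm, hv⟩
          · left; exact h
          · right; exact ⟨m, by omega, hv⟩
      · rw [if_neg h0] at hcs
        constructor
        · rw [hcs, hupd' 0 (fun h => h0 h.symm), ih.1]
        · intro i hi
          by_cases hii : i = sel t
          · subst hii
            rw [hcopy h0]
            by_cases hp : sel t - 1 = 0
            · right
              refine ⟨cnt t, by omega, ?_⟩
              rw [hp]
              exact ih.1
            · rcases ih.2 (sel t - 1) hp with h | ⟨m, hm, hv⟩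
              · left; exact h
              · right; exact ⟨m, by omega, hv⟩
          · rw [hupd' i hii]
            rcases ih.2 i hi with h | ⟨m, hm, hv⟩
            · left; exact h
            · right; exact ⟨m, by omega, hv⟩
  -- every count value is reached
  have hreach : ∀ N, ∃ t, t0 ≤ t ∧ cnt t = N := by
    intro N
    induction N with
    | zero => exact ⟨t0, le_refl _, hcnt0⟩
    | succ N ih =>
      obtain ⟨t, ht, hc⟩ := ih
      obtain ⟨m0, hm0, hsm0⟩ := hzio t
      have hex : ∃ m, t ≤ m ∧ sel m = 0 := ⟨m0, hm0, hsm0⟩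
      obtain ⟨hm1, hm2⟩ := Nat.find_spec hex
      have hconst : ∀ r, t ≤ r → r ≤ Nat.find hex → cnt r = N := by
        intro r hr1
        induction r, hr1 using Nat.le_induction with
        | base => intro _; exact hc
        | succ r hr ih2 =>
          intro hr2
          have hselr : sel r ≠ 0 := fun h => (Nat.find_min hex (by omega)) ⟨hr, h⟩
          rw [hcnt_succ r (le_trans ht hr), if_neg hselr]
          exact ih2 (by omega)
      refine ⟨Nat.find hex + 1, by omega, ?_⟩
      rw [hcnt_succ _ (le_trans ht hm1), if_pos hm2, hconst _ hm1 (le_refl _)]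
  -- the first time the fresh value appears at player 0
  obtain ⟨te, hte0, htecnt⟩ := hreach j
  have hexj : ∃ t, t0 ≤ t ∧ cnt t = j := ⟨te, hte0, htecnt⟩
  obtain ⟨ht1a, ht1b⟩ := Nat.find_spec hexj
  have ht1pos : t0 < Nat.find hexj := by
    have hne : Nat.find hexj ≠ t0 := fun h => by rw [h, hcnt0] at ht1b; omega
    omega
  have hprev : sel (Nat.find hexj - 1) = 0 ∧ cnt (Nat.find hexj - 1) = j - 1 := by
    have ht1m : t0 ≤ Nat.find hexj - 1 := by omega
    have hcs := hcnt_succ (Nat.find hexj - 1) ht1m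
    have hrw : Nat.find hexj - 1 + 1 = Nat.find hexj := by omega
    rw [hrw] at hcs
    by_cases h : sel (Nat.find hexj - 1) = 0
    · rw [if_pos h] at hcs
      exact ⟨h, by omega⟩
    · exfalso
      rw [if_neg h] at hcs
      exact Nat.find_min hexj (show Nat.find hexj - 1 < Nat.find hexj by omega)
        ⟨ht1m, by omega⟩
  have hfresh1 : ∀ i : Fin n, i ≠ 0 → σ (Nat.find hexj) i ≠ (π ^ j) (σ t0 0) := by
    intro i hi
    obtain ⟨hupd', -, -, -, -, -, -⟩ := hstep (Nat.find hexj - 1)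
    have hrw : Nat.find hexj - 1 + 1 = Nat.find hexj := by omega
    rw [hrw] at hupd'
    have hchange : σ (Nat.find hexj) i = σ (Nat.find hexj - 1) i :=
      hupd' i (by rw [hprev.1]; exact hi)
    rw [hchange]
    rcases (hinv (Nat.find hexj - 1) (by omega)).2 i hi with h | ⟨m, hm, hv⟩
    · intro he; exact hjB (he ▸ h)
    · rw [hv]
      intro he
      have hmj : m = j := hginj m j (by omega) hjC he
      omega
  have ht1w : σ (Nat.find hexj) 0 = (π ^ j) (σ t0 0) := by
    rw [(hinv (Nat.find hexj) (by omega)).1, ht1b]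
  -- the next 0-selection after the fresh value appears
  obtain ⟨ms, hms1, hms2⟩ := hzio (Nat.find hexj)
  have hexs : ∃ m, Nat.find hexj ≤ m ∧ sel m = 0 := ⟨ms, hms1, hms2⟩
  obtain ⟨htsa, htsb⟩ := Nat.find_spec hexs
  have hnot0 : ∀ r, Nat.find hexj ≤ r → r < Nat.find hexs → sel r ≠ 0 :=
    fun r h1 h2 h => Nat.find_min hexs h2 ⟨h1, h⟩
  -- prefix invariant
  have hQ : ∀ t, Nat.find hexj ≤ t → t ≤ Nat.find hexs →
      (σ t 0 = (π ^ j) (σ t0 0) ∧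
      ∀ i : Fin n, i ≠ 0 → σ t i = (π ^ j) (σ t0 0) → σ t (i-1) = (π ^ j) (σ t0 0)) := by
    intro t ht
    induction t, ht using Nat.le_induction with
    | base =>
      intro _
      exact ⟨ht1w, fun i hi he => absurd he (hfresh1 i hi)⟩
    | succ t ht ih =>
      intro hts
      obtain ⟨hQ0, hQc⟩ := ih (by omega)
      obtain ⟨hupd', -, -, hcopy, -, -, -⟩ := hstep t
      have hsel : sel t ≠ 0 := hnot0 t ht (by omega)
      refine ⟨by rw [hupd' 0 (fun h => hsel h.symm)]; exact hQ0, ?_⟩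
      intro i hi hie
      by_cases hii : i = sel t
      · subst hii
        have h1 : σ (t+1) (sel t - 1) = σ t (sel t - 1) := hupd' _ (sub_one_ne_self hn1 _)
        rw [h1]
        rw [hcopy hsel] at hie
        exact hie
      · have h2 : σ (t+1) i = σ t i := hupd' i hii
        rw [h2] at hie
        by_cases hip : i - 1 = sel t
        · rw [hip, hcopy hsel]
          have h3 := hQc i hi hie
          rw [hip] at h3
          exact hQc (sel t) hsel h3
        · rw [hupd' _ hip]
          exact hQc i hi hie
  obtain ⟨hQ0s, hQcs⟩ := hQ (Nat.find hexs) htsa (le_refl _)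
  have htokts : σ (Nat.find hexs) 0 = σ (Nat.find hexs) (0-1) := by
    have h := (hstep (Nat.find hexs)).2.1
    rw [htsb] at h
    exact mem_tokens_zero.mp h
  -- at that time everyone holds the fresh value
  have hall : ∀ i : Fin n, σ (Nat.find hexs) i = (π ^ j) (σ t0 0) := by
    have hdesc : ∀ d, d ≤ n - 1 →
        σ (Nat.find hexs) ⟨n - 1 - d, by omega⟩ = (π ^ j) (σ t0 0) := by
      intro d
      induction d with
      | zero =>
        intro _
        have hval : ((0:Fin n) - 1) = (⟨n - 1 - 0, by omega⟩ : Fin n) :=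
          Fin.ext (by rw [neg_one_val hn1]; simp)
        rw [← hval, ← htokts]
        exact hQ0s
      | succ d ih =>
        intro hd
        have hprev2 := ih (by omega)
        have hne : (⟨n - 1 - d, by omega⟩ : Fin n) ≠ 0 :=
          Fin.ne_of_val_ne (by simp; omega)
        have h4 := hQcs _ hne hprev2
        have hsub : (⟨n - 1 - d, by omega⟩ : Fin n) - 1 = (⟨n - 1 - (d+1), by omega⟩ : Fin n) :=
          Fin.ext (by rw [sub_one_val hn1 _ hne]; simp; omega)
        rw [hsub] at h4
        exact h4
    intro i
    have h := hdesc (n - 1 - i.val) (by omega)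
    have heq : (⟨n - 1 - (n - 1 - i.val), by omega⟩ : Fin n) = i :=
      Fin.ext (by simp; have := i.isLt; omega)
    rw [heq] at h
    exact h
  -- exactly one token from then on
  have htokset : tokens (σ (Nat.find hexs)) = {0} := by
    ext i
    rw [Finset.mem_singleton]
    by_cases hi : i = 0
    · subst hi
      simp only [iff_true]
      exact mem_tokens_zero.mpr htokts
    · rw [mem_tokens_ne hi]
      simp only [hi, iff_false, not_not]
      rw [hall i, hall (i-1)]
  have hcard1 : ∀ m, Nat.find hexs ≤ m → (tokens (σ m)).card = 1 := by
    intro m hm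
    have hle := hmono' (Nat.find hexs) m hm
    rw [htokset, Finset.card_singleton] at hle
    have hpos : 0 < (tokens (σ m)).card := Finset.card_pos.mpr ⟨sel m, (hstep m).2.1⟩
    omega
  have hleg : ∀ m, Nat.find hexs ≤ m → Legitimate (ringPayoff (n:=n) (C:=C)) (σ m) := by
    intro m hm
    obtain ⟨a, ha⟩ := Finset.card_eq_one.mp (hcard1 m hm)
    refine ⟨a, ?_, ?_⟩
    · show ¬ BestResponse (ringPayoff (n:=n) (C:=C)) (σ m) a
      rw [notBR_iff hn1 hC1, ha]
      exact Finset.mem_singleton_self a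
    · intro y hy
      have h := (notBR_iff hn1 hC1 _ _).mp hy
      rw [ha, Finset.mem_singleton] at h
      exact h
  -- the unique token cycles around the ring
  have hselt : ∀ m, Nat.find hexs ≤ m → tokens (σ m) = {sel m} := by
    intro m hm
    obtain ⟨a, ha⟩ := Finset.card_eq_one.mp (hcard1 m hm)
    have h : sel m ∈ tokens (σ m) := (hstep m).2.1
    rw [ha, Finset.mem_singleton] at h
    rw [ha, h]
  have hselsucc : ∀ m, Nat.find hexs ≤ m → sel (m+1) = sel m + 1 := by
    intro m hm
    have hsub := (hstep m).2.2.2.2.2.2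
    rw [hselt m hm, hselt (m+1) (by omega)] at hsub
    have h : sel (m+1) ∈ insert (sel m + 1) (({sel m} : Finset (Fin n)).erase (sel m)) :=
      hsub (Finset.mem_singleton_self _)
    rw [Finset.erase_singleton] at h
    simpa using h
  open Fin.CommRing in
  have hseladd : ∀ d, sel (Nat.find hexs + d) = sel (Nat.find hexs) + (d : Fin n) := by
    intro d
    induction d with
    | zero => simp
    | succ d ih =>
      have h1 : Nat.find hexs + (d+1) = (Nat.find hexs + d) + 1 := by omega
      rw [h1, hselsucc (Nat.find hexs + d) (by omega), ih]
      push_cast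
      ring
  constructor
  · intro i k
    refine ⟨Nat.find hexs + ((i - sel (Nat.find hexs)).val + n * k), ?_, ?_⟩
    · have h : k ≤ n * k := Nat.le_mul_of_pos_left k (by omega)
      omega
    · rw [hseladd]
      open Fin.CommRing in
      have hc1 : (((i - sel (Nat.find hexs)).val + n * k : ℕ) : Fin n)
          = i - sel (Nat.find hexs) := by
        push_cast
        rw [Fin.natCast_self]
        ring
      rw [hc1, add_comm, sub_add_cancel]
  · exact ⟨Nat.find hexs, hleg⟩
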